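/- Let G be a compactly generated locally compact group with compact generating set S, H a closed subgroup such that G is H-combable, and ℓ : G → ℝ≥0 a subadditive length function (ℓ(gh) ≤ ℓ(g) + ℓ(h)) that is sublinear on H with respect to the restricted word length of G. Then ℓ is sublinear on all of G. -/

import Mathlib

open Pointwise

noncomputable def wordLength {G : Type*} [Group G] (S : Set G) (g : G) : ℕ :=
  sInf {n : ℕ | g ∈ S ^ n}

private lemma prod_le_aux {G : Type*} [Group G] (ℓ : G → ℝ)
    (hℓsub : ∀ g h : G, ℓ (g * h) ≤ ℓ g + ℓ h) :
    ∀ L : List G, ℓ L.prod ≤ ℓ 1 + (L.map ℓ).sum := by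
  intro L
  induction L with
  | nil => simp
  | cons a t ih =>
      simp only [List.prod_cons, List.map_cons, List.sum_cons]
      calc ℓ (a * t.prod) ≤ ℓ a + ℓ t.prod := hℓsub a t.prod
        _ ≤ ℓ a + (ℓ 1 + (t.map ℓ).sum) := by linarith
        _ = ℓ 1 + (ℓ a + (t.map ℓ).sum) := by ring

private lemma pow_bound_aux {G : Type*} [Group G] (S : Set G) (ℓ : G → ℝ)
    (hℓsub : ∀ g h : G, ℓ (g * h) ≤ ℓ g + ℓ h)
    (M : ℝ) (hM : ∀ s ∈ S, ℓ s ≤ M) (hM1 : ℓ 1 ≤ M)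
    {g : G} {n : ℕ} (hg : g ∈ S ^ n) : ℓ g ≤ M + n * M := by
  obtain ⟨f, hf⟩ := Set.mem_pow.mp hg
  have h1 : ℓ g ≤ ℓ 1 + ((List.ofFn fun i => (f i : G)).map ℓ).sum := by
    rw [← hf]; exact prod_le_aux ℓ hℓsub _
  have h2 : ((List.ofFn fun i => (f i : G)).map ℓ).sum ≤ n * M := by
    rw [List.map_ofFn, List.sum_ofFn]
    calc (∑ i : Fin n, ℓ (f i)) ≤ ∑ i : Fin n, M :=
          Finset.sum_le_sum fun i _ => hM _ (f i).2
      _ = n * M := by simp [mul_comm]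
  linarith

/-- if `G` is `H`-combable and a subadditive length function `ℓ`, bounded on
`S`, is sublinear on `H`, then `ℓ` is sublinear on all of `G`. -/
theorem stmt12 {G : Type*} [Group G] [TopologicalSpace G] [IsTopologicalGroup G]
    [LocallyCompactSpace G]
    (S : Set G) (hScomp : IsCompact S) (hS1 : (1 : G) ∈ S) (hSsymm : S⁻¹ = S)
    (hSgen : ∀ g : G, ∃ n : ℕ, g ∈ S ^ n)
    (H : Subgroup G) (hHclosed : IsClosed (H : Set G))
    (ℓ : G → ℝ) (hℓ0 : ∀ g, 0 ≤ ℓ g)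
    (hℓsub : ∀ g h : G, ℓ (g * h) ≤ ℓ g + ℓ h)
    (M : ℝ) (hM : ∀ s ∈ S, ℓ s ≤ M)
    (k : ℕ) (C : ℝ) (hC : 1 ≤ C)
    (hcomb : ∀ g : G, ∃ w : Fin k → G, (∀ i, w i ∈ S ∪ (H : Set G)) ∧
      (List.ofFn w).prod = g ∧
      (∑ i, (wordLength S (w i) : ℝ)) ≤ C * wordLength S g)
    (hHsub : ∀ ε : ℝ, 0 < ε → ∃ N : ℕ, ∀ h ∈ H,
      N ≤ wordLength S h → ℓ h ≤ ε * wordLength S h) :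
    ∀ ε : ℝ, 0 < ε → ∃ N : ℕ, ∀ g : G,
      N ≤ wordLength S g → ℓ g ≤ ε * wordLength S g := by
  intro ε hε
  have hC0 : (0 : ℝ) < C := lt_of_lt_of_le one_pos hC
  have hε' : 0 < ε / (2 * C) := by positivity
  obtain ⟨N₀, hN₀⟩ := hHsub (ε / (2 * C)) hε'
  have hM1 : ℓ 1 ≤ M := hM 1 hS1
  have hM0 : 0 ≤ M := le_trans (hℓ0 1) hM1
  -- every element lies in S ^ (its word length)
  have hmem : ∀ g : G, g ∈ S ^ (wordLength S g) := fun g =>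
    Nat.sInf_mem (hSgen g)
  -- uniform bound on pieces
  have hpiece : ∀ g : G, g ∈ S ∪ (H : Set G) →
      ℓ g ≤ (ε / (2 * C)) * wordLength S g + ((N₀ + 1) * M + M) := by
    intro g hg
    have hεw : 0 ≤ (ε / (2 * C)) * wordLength S g := by positivity
    rcases hg with hg | hg
    · have := hM g hg
      nlinarith [Nat.cast_nonneg (α := ℝ) N₀]
    · by_cases hbig : N₀ ≤ wordLength S g
      · have := hN₀ g hg hbig
        nlinarith [Nat.cast_nonneg (α := ℝ) N₀]
      · have hb : ℓ g ≤ M + (wordLength S g : ℝ) * M :=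
          pow_bound_aux S ℓ hℓsub M hM hM1 (hmem g)
        have : (wordLength S g : ℝ) ≤ N₀ := by
          exact_mod_cast le_of_lt (lt_of_not_ge hbig)
        nlinarith
  set D : ℝ := k * ((N₀ + 1) * M + M) + M with hD
  have hD0 : 0 ≤ D := by positivity
  refine ⟨⌈2 * D / ε⌉₊, fun g hg => ?_⟩
  obtain ⟨w, hw, hprod, hsum⟩ := hcomb g
  have h1 : ℓ g ≤ ℓ 1 + ∑ i, ℓ (w i) := by
    calc ℓ g = ℓ (List.ofFn w).prod := by rw [hprod]
      _ ≤ ℓ 1 + ((List.ofFn w).map ℓ).sum := prod_le_aux ℓ hℓsub _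
      _ = ℓ 1 + ∑ i, ℓ (w i) := by rw [List.map_ofFn, List.sum_ofFn]; rfl
  have h2 : (∑ i, ℓ (w i)) ≤
      (ε / (2 * C)) * ∑ i, (wordLength S (w i) : ℝ) + k * ((N₀ + 1) * M + M) := by
    rw [Finset.mul_sum]
    calc (∑ i, ℓ (w i))
        ≤ ∑ i, ((ε / (2 * C)) * wordLength S (w i) + ((N₀ + 1) * M + M)) :=
          Finset.sum_le_sum fun i _ => hpiece (w i) (hw i)
      _ = (∑ i, (ε / (2 * C)) * (wordLength S (w i) : ℝ)) + k * ((N₀ + 1) * M + M) := by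
          rw [Finset.sum_add_distrib]; simp [mul_comm]; ring
  have h3 : (ε / (2 * C)) * (∑ i, (wordLength S (w i) : ℝ)) ≤
      (ε / (2 * C)) * (C * wordLength S g) :=
    mul_le_mul_of_nonneg_left hsum (le_of_lt hε')
  have h4 : (ε / (2 * C)) * (C * wordLength S g) = ε / 2 * wordLength S g := by
    field_simp
  have hNg : 2 * D / ε ≤ (wordLength S g : ℝ) :=
    le_trans (Nat.le_ceil _) (by exact_mod_cast hg)
  have h5 : D ≤ ε / 2 * wordLength S g := by
    rw [div_le_iff₀ hε] at hNg
    nlinarith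
  have : ℓ g ≤ ε / 2 * wordLength S g + D := by
    rw [hD]; linarith [h1, h2, h3, h4, hM1]
  linarith
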